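/- Let L be a prefix-closed language over a finite alphabet Σ recognized by a deterministic automaton A = (Q, q₀, Σ, δ, F) whose set F of final states is finite (Q may be infinite). Then L is regular. Equivalently, every deterministic automaton recognizing a non-regular prefix-closed language has infinitely many final states. -/

import Mathlib

/-- The set of prefixes of words of a language `L`. -/
def pref {A : Type*} (L : Set (List A)) : Set (List A) := {u | ∃ v ∈ L, u <+: v}

/-- Transition function of a deterministic automaton extended to words. -/
def deltaStar {Q A : Type*} (δ : Q → A → Q) (q : Q) (w : List A) : Q := w.foldl δ q

lemma deltaStar_append {Q A : Type*} (δ : Q → A → Q) (q : Q) (u : List A) (a : A) :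
    deltaStar δ q (u ++ [a]) = δ (deltaStar δ q u) a := by
  simp [deltaStar]

lemma deltaStar_equiv {Q Q' A : Type*} (e : Q ≃ Q') (δ : Q → A → Q) (q : Q) (w : List A) :
    deltaStar (fun p a => e (δ (e.symm p) a)) (e q) w = e (deltaStar δ q w) := by
  induction w generalizing q with
  | nil => rfl
  | cons a w ih => simp only [deltaStar, List.foldl_cons, e.symm_apply_apply] at *; exact ih _

/-- A prefix-closed language recognized by a deterministic automaton (with possibly
infinitely many states) having only finitely many final states is regular, i.e. it is
recognized by a deterministic automaton with finitely many states. -/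
theorem stmt_10 {Γ : Type*} [Fintype Γ] (L : Set (List Γ)) (hpc : pref L = L)
    {Q : Type*} (q0 : Q) (δ : Q → Γ → Q) (F : Set Q) (hF : F.Finite)
    (hL : L = {w | deltaStar δ q0 w ∈ F}) :
    ∃ (n : ℕ) (q0' : Fin n) (δ' : Fin n → Γ → Fin n) (F' : Set (Fin n)),
      L = {w | deltaStar δ' q0' w ∈ F'} := by
  classical
  have hmem : ∀ w, w ∈ L ↔ deltaStar δ q0 w ∈ F := by
    intro w; rw [hL]; rfl
  have hpref : ∀ (u : List Γ) (a : Γ), u ++ [a] ∈ L → u ∈ L := by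
    intro u a h
    rw [← hpc]
    exact ⟨u ++ [a], h, ⟨[a], rfl⟩⟩
  haveI : Fintype ↥hF.toFinset := FinsetCoe.fintype _
  set S := hF.toFinset with hS
  let Q' := Option ↥S
  let δ1 : Q' → Γ → Q' := fun q a =>
    q.bind (fun s => if h : δ s.1 a ∈ S then some ⟨δ s.1 a, h⟩ else none)
  let q1 : Q' := if h : q0 ∈ S then some ⟨q0, h⟩ else none
  have hSF : ∀ q, q ∈ S ↔ q ∈ F := fun q => hF.mem_toFinset
  have key : ∀ w, deltaStar δ1 q1 w =
      if h : deltaStar δ q0 w ∈ S ∧ w ∈ L then some ⟨deltaStar δ q0 w, h.1⟩ else none := by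
    intro w
    induction w using List.reverseRecOn with
    | nil =>
      simp only [deltaStar, List.foldl_nil]
      by_cases h : q0 ∈ S
      · have : [] ∈ L := (hmem []).2 ((hSF q0).1 h)
        simp [q1, h, this]
      · have : ¬ ([] : List Γ) ∈ L := fun hc => h ((hSF q0).2 ((hmem []).1 hc))
        simp [q1, h, this]
    | append_singleton u a ih =>
      rw [deltaStar_append, deltaStar_append, ih]
      by_cases hu : deltaStar δ q0 u ∈ S ∧ u ∈ L
      · simp only [dif_pos hu]
        by_cases hw : δ (deltaStar δ q0 u) a ∈ S
        · have hwL : u ++ [a] ∈ L := by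
            apply (hmem _).2
            rw [deltaStar_append]
            exact (hSF _).1 hw
          simp [δ1, hw, hwL]
        · have hwL : ¬ u ++ [a] ∈ L := by
            intro hc
            apply hw
            have := (hmem _).1 hc
            rw [deltaStar_append] at this
            exact (hSF _).2 this
          simp [δ1, hw, hwL]
      · simp only [dif_neg hu]
        have hwL : ¬ u ++ [a] ∈ L := fun hc => by
          have huL := hpref u a hc
          exact hu ⟨(hSF _).2 ((hmem u).1 huL), huL⟩
        simp [δ1, hwL]
  -- transfer to Fin n
  let e := Fintype.equivFin Q'
  refine ⟨Fintype.card Q', e q1, fun p a => e (δ1 (e.symm p) a), {p | ∃ s, p = e (some s)}, ?_⟩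
  ext w
  rw [Set.mem_setOf_eq, deltaStar_equiv e δ1 q1 w, key w]
  constructor
  · intro hw
    have h : deltaStar δ q0 w ∈ S ∧ w ∈ L :=
      ⟨(hSF _).2 ((hmem w).1 hw), hw⟩
    exact ⟨⟨deltaStar δ q0 w, h.1⟩, by rw [dif_pos h]⟩
  · rintro ⟨s, hs⟩
    by_contra hw
    have h : ¬ (deltaStar δ q0 w ∈ S ∧ w ∈ L) := fun hc => hw hc.2
    rw [dif_neg h] at hs
    exact Option.some_ne_none s (e.injective hs).symm
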